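/- Suppose the equation x(k+1) = A(k)x(k) has an exponential dichotomy on ℤ₊ with projection P(k). Then: (a) the stable subspace R(P(0)) is uniquely determined, i.e. if the equation also has an exponential dichotomy on ℤ₊ with projection Q(k), then R(Q(0)) = R(P(0)); (b) for every subspace W of ℝⁿ with W ⊕ R(P(0)) = ℝⁿ there exists a unique projection family Q(k), k ∈ ℤ₊, satisfying the invariance Q(k+1)A(k) = A(k)Q(k), such that N(Q(0)) = W and the equation has an exponential dichotomy on ℤ₊ with projection Q(k) (for some constants); moreover this Q(k) satisfies R(Q(k)) = R(P(k)) for all k ≥ 0. -/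

import Mathlib

noncomputable section

open scoped BigOperators

/-- ℝⁿ as a Euclidean space. -/
abbrev Euc (n : ℕ) := EuclideanSpace ℝ (Fin n)

/-- The transition matrix `Φ(k,m) = A(k-1) ⋯ A(m)`, with `Φ(m,m) = 1`
(and `Φ(k,m) = 1` when `k ≤ m`). -/
def Phi {n : ℕ} (A : ℤ → (Euc n →L[ℝ] Euc n)) (k m : ℤ) : Euc n →L[ℝ] Euc n :=
  (((List.range (k - m).toNat).map fun i => A (m + i)).reverse).prod

/-- `J` is an interval of integers. -/
def IsIntInterval (J : Set ℤ) : Prop :=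
  ∀ ⦃a b c : ℤ⦄, a ∈ J → b ∈ J → a ≤ c → c ≤ b → c ∈ J

/-- The equation `x(k+1) = A(k) x(k)` has an exponential dichotomy on `J` with
projection family `P`, constant `K` and exponent `α`. -/
structure ExpDichotomyOn {n : ℕ} (A : ℤ → (Euc n →L[ℝ] Euc n)) (J : Set ℤ)
    (P : ℤ → (Euc n →L[ℝ] Euc n)) (K α : ℝ) : Prop where
  one_le_K : 1 ≤ K
  alpha_pos : 0 < α
  proj : ∀ k ∈ J, P k ∘L P k = P k
  rank_const : ∀ k ∈ J, ∀ m ∈ J,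
    Module.finrank ℝ (LinearMap.range (P k : Euc n →ₗ[ℝ] Euc n)) = Module.finrank ℝ (LinearMap.range (P m : Euc n →ₗ[ℝ] Euc n))
  invariance : ∀ m ∈ J, ∀ k ∈ J, m ≤ k → Phi A k m ∘L P m = P k ∘L Phi A k m
  forward : ∀ m ∈ J, ∀ k ∈ J, m ≤ k →
    ‖Phi A k m ∘L P m‖ ≤ K * Real.exp (-α * ((k : ℝ) - (m : ℝ)))
  bijOn : ∀ k : ℤ, k ∈ J → k + 1 ∈ J →
    Set.BijOn (A k) (LinearMap.ker (P k : Euc n →ₗ[ℝ] Euc n) : Set (Euc n)) (LinearMap.ker (P (k + 1) : Euc n →ₗ[ℝ] Euc n) : Set (Euc n))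
  backward : ∃ Ψ : ℤ → ℤ → (Euc n →L[ℝ] Euc n), ∀ m ∈ J, ∀ k ∈ J, m ≤ k →
    (∀ x ∈ LinearMap.ker (P m : Euc n →ₗ[ℝ] Euc n), Ψ m k (Phi A k m x) = x) ∧
    (∀ x ∈ LinearMap.ker (P k : Euc n →ₗ[ℝ] Euc n), Ψ m k x ∈ LinearMap.ker (P m : Euc n →ₗ[ℝ] Euc n) ∧ Phi A k m (Ψ m k x) = x) ∧
    ‖Ψ m k ∘L (1 - P k)‖ ≤ K * Real.exp (-α * ((k : ℝ) - (m : ℝ)))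

theorem Phi_self {n : ℕ} (A : ℤ → (Euc n →L[ℝ] Euc n)) (m : ℤ) : Phi A m m = 1 := by
  simp [Phi]

theorem Phi_succ {n : ℕ} (A : ℤ → (Euc n →L[ℝ] Euc n)) {k m : ℤ} (h : m ≤ k) :
    Phi A (k+1) m = A k ∘L Phi A k m := by
  have h1 : (k + 1 - m).toNat = (k - m).toNat + 1 := by omega
  have h3 : m + ((k - m) ⊔ 0) = k := by omega
  simp [Phi, h1, h3, List.range_succ, ContinuousLinearMap.mul_def]

theorem Phi_comp {n : ℕ} (A : ℤ → (Euc n →L[ℝ] Euc n)) {k m l : ℤ} (h1 : l ≤ m) (h2 : m ≤ k) :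
    Phi A k m ∘L Phi A m l = Phi A k l := by
  refine Int.le_induction (motive := fun k _ => Phi A k m ∘L Phi A m l = Phi A k l) ?_ ?_ k h2
  · show Phi A m m ∘L Phi A m l = Phi A m l
    rw [Phi_self, ContinuousLinearMap.one_def, ContinuousLinearMap.id_comp]
  · intro k hk ih
    rw [Phi_succ A hk, Phi_succ A (le_trans h1 hk), ContinuousLinearMap.comp_assoc, ih]

theorem Phi_one {n : ℕ} (A : ℤ → (Euc n →L[ℝ] Euc n)) (k : ℤ) : Phi A (k+1) k = A k := by
  rw [Phi_succ A le_rfl, Phi_self, ContinuousLinearMap.one_def, ContinuousLinearMap.comp_id]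

/-- pointwise version of an operator identity -/
theorem cptw {n : ℕ} {f g h : Euc n →L[ℝ] Euc n} (H : f ∘L g = h) (x : Euc n) :
    f (g x) = h x := by
  rw [← ContinuousLinearMap.comp_apply, H]

/-- Two projections with the same range and kernel coincide. -/
theorem proj_ext {n : ℕ} {Q Q' : Euc n →L[ℝ] Euc n} (hQ : Q ∘L Q = Q) (hQ' : Q' ∘L Q' = Q')
    (hr : LinearMap.range (Q : Euc n →ₗ[ℝ] Euc n) = LinearMap.range (Q' : Euc n →ₗ[ℝ] Euc n))
    (hk : LinearMap.ker (Q : Euc n →ₗ[ℝ] Euc n) = LinearMap.ker (Q' : Euc n →ₗ[ℝ] Euc n)) : Q = Q' := by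
  refine ContinuousLinearMap.ext fun x => ?_
  have h1 : Q (Q' x) = Q' x := by
    have : Q' x ∈ LinearMap.range (Q : Euc n →ₗ[ℝ] Euc n) := hr ▸ LinearMap.mem_range_self _ x
    obtain ⟨y, hy⟩ := this
    rw [← hy, ContinuousLinearMap.coe_coe, cptw hQ]
  have h2 : Q (x - Q' x) = 0 := by
    have : x - Q' x ∈ LinearMap.ker (Q : Euc n →ₗ[ℝ] Euc n) := by
      rw [hk, LinearMap.mem_ker, map_sub, ContinuousLinearMap.coe_coe, cptw hQ', sub_self]
    exact this
  have h3 : (0 : Euc n) = Q x - Q' x := by rw [← h2, map_sub, h1]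
  exact sub_eq_zero.mp h3.symm

open Filter Topology in
theorem range_char {n : ℕ} (A Q : ℤ → (Euc n →L[ℝ] Euc n)) {K α : ℝ}
    (h : ExpDichotomyOn A {k : ℤ | 0 ≤ k} Q K α) {m : ℤ} (hm : (0:ℤ) ≤ m) (x : Euc n) :
    x ∈ LinearMap.range (Q m : Euc n →ₗ[ℝ] Euc n) ↔ ∃ C, ∀ k, m ≤ k → ‖Phi A k m x‖ ≤ C := by
  have hmJ : m ∈ {k : ℤ | 0 ≤ k} := hm
  constructor
  · rintro ⟨y, hy⟩
    have hfix : Q m x = x := by rw [← hy]; exact cptw (h.proj m hmJ) y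
    refine ⟨K * ‖x‖, fun k hk => ?_⟩
    have hkJ : k ∈ {k : ℤ | 0 ≤ k} := le_trans hm hk
    have hcast : (m:ℝ) ≤ (k:ℝ) := Int.cast_le.mpr hk
    have hexp : Real.exp (-α * ((k:ℝ) - (m:ℝ))) ≤ 1 := by
      apply Real.exp_le_one_iff.mpr
      nlinarith [h.alpha_pos]
    calc ‖Phi A k m x‖ = ‖(Phi A k m ∘L Q m) x‖ := by
          rw [ContinuousLinearMap.comp_apply, hfix]
      _ ≤ ‖Phi A k m ∘L Q m‖ * ‖x‖ := (Phi A k m ∘L Q m).le_opNorm x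
      _ ≤ (K * Real.exp (-α * ((k:ℝ) - (m:ℝ)))) * ‖x‖ :=
          mul_le_mul_of_nonneg_right (h.forward m hmJ k hkJ hk) (norm_nonneg x)
      _ ≤ K * 1 * ‖x‖ := by
          gcongr
          · linarith [h.one_le_K]
      _ = K * ‖x‖ := by ring
  · rintro ⟨C, hC⟩
    obtain ⟨Ψ, hΨ⟩ := h.backward
    set w := x - Q m x with hw
    have hwker : Q m w = 0 := by
      rw [hw, map_sub, cptw (h.proj m hmJ) x, sub_self]
    have hC0 : 0 ≤ C := by
      have := hC m le_rfl
      rw [Phi_self] at this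
      simp only [ContinuousLinearMap.one_apply] at this
      exact le_trans (norm_nonneg x) this
    have key : ∀ j : ℕ, ‖w‖ ≤ K * Real.exp (-α * (j:ℝ)) * C := by
      intro j
      set k : ℤ := m + (j:ℤ) with hkdef
      have hk : m ≤ k := by omega
      have hkJ : k ∈ {k : ℤ | 0 ≤ k} := by show (0:ℤ) ≤ k; omega
      obtain ⟨hb1, hb2, hb3⟩ := hΨ m hmJ k hkJ hk
      have hinv := cptw (h.invariance m hmJ k hkJ hk) x
      rw [ContinuousLinearMap.comp_apply] at hinv
      have h1 : Phi A k m w = (1 - Q k) (Phi A k m x) := by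
        rw [hw, map_sub, hinv]
        simp [ContinuousLinearMap.sub_apply]
      have h2 : w = (Ψ m k ∘L (1 - Q k)) (Phi A k m x) := by
        rw [ContinuousLinearMap.comp_apply, ← h1, hb1 w (LinearMap.mem_ker.mpr hwker)]
      have hcast : ((k:ℝ) - (m:ℝ)) = (j:ℝ) := by rw [hkdef]; push_cast; ring
      calc ‖w‖ = ‖(Ψ m k ∘L (1 - Q k)) (Phi A k m x)‖ := by rw [← h2]
        _ ≤ ‖Ψ m k ∘L (1 - Q k)‖ * ‖Phi A k m x‖ := (Ψ m k ∘L (1 - Q k)).le_opNorm _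
        _ ≤ (K * Real.exp (-α * ((k:ℝ) - (m:ℝ)))) * C :=
            mul_le_mul hb3 (hC k hk) (norm_nonneg _) (mul_nonneg (by linarith [h.one_le_K]) (Real.exp_pos _).le)
        _ = K * Real.exp (-α * (j:ℝ)) * C := by rw [hcast]
    have hlim : Tendsto (fun j : ℕ => K * Real.exp (-α * (j:ℝ)) * C) atTop (𝓝 0) := by
      have heq : ∀ j : ℕ, K * Real.exp (-α * (j:ℝ)) * C = K * (Real.exp (-α)) ^ j * C := by
        intro j
        rw [← Real.exp_nat_mul]
        ring_nf
      simp only [heq]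
      have h0 : |Real.exp (-α)| < 1 := by
        rw [abs_of_pos (Real.exp_pos _)]
        exact Real.exp_lt_one_iff.mpr (by linarith [h.alpha_pos])
      have := (tendsto_pow_atTop_nhds_zero_of_abs_lt_one h0).const_mul K |>.mul_const C
      simpa using this
    have hle : ‖w‖ ≤ 0 := ge_of_tendsto' hlim key
    have hw0 : w = 0 := norm_le_zero_iff.mp hle
    have : Q m x = x := by
      have := sub_eq_zero.mp (hw ▸ hw0)
      exact this.symm
    exact ⟨x, this⟩

set_option maxHeartbeats 1000000 in
theorem exists_Q {n : ℕ} (A P : ℤ → (Euc n →L[ℝ] Euc n)) (K α : ℝ)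
    (hED : ExpDichotomyOn A {k : ℤ | 0 ≤ k} P K α)
    (W : Submodule ℝ (Euc n)) (hW : IsCompl W (LinearMap.range (P 0 : Euc n →ₗ[ℝ] Euc n))) :
    ∃ Q : ℤ → (Euc n →L[ℝ] Euc n),
      (∀ k : ℤ, 0 ≤ k → Q (k + 1) ∘L A k = A k ∘L Q k) ∧
      LinearMap.ker (Q 0 : Euc n →ₗ[ℝ] Euc n) = W ∧
      (∃ K' α' : ℝ, ExpDichotomyOn A {k : ℤ | 0 ≤ k} Q K' α') ∧
      (∀ k : ℤ, 0 ≤ k → LinearMap.range (Q k : Euc n →ₗ[ℝ] Euc n) = LinearMap.range (P k : Euc n →ₗ[ℝ] Euc n)) := by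
  have h0J : (0:ℤ) ∈ {k : ℤ | 0 ≤ k} := le_refl (0:ℤ)
  set R := LinearMap.range (P 0 : Euc n →ₗ[ℝ] Euc n) with hRdef
  set Q0 : Euc n →L[ℝ] Euc n :=
    LinearMap.toContinuousLinearMap (R.subtype ∘ₗ R.linearProjOfIsCompl W hW.symm) with hQ0def
  have hQ0apply : ∀ x, Q0 x = ((R.linearProjOfIsCompl W hW.symm) x : Euc n) := fun x => by
    simp [hQ0def]
  have hQ0mem : ∀ x, Q0 x ∈ R := fun x => by rw [hQ0apply]; exact Submodule.coe_mem _
  have hQ0fix : ∀ x, x ∈ R → Q0 x = x := fun x hx => by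
    rw [hQ0apply]
    exact congrArg Subtype.val (Submodule.linearProjOfIsCompl_apply_left hW.symm ⟨x, hx⟩)
  have hQ0ker : LinearMap.ker (Q0 : Euc n →ₗ[ℝ] Euc n) = W := by
    ext x
    rw [LinearMap.mem_ker]
    constructor
    · intro hx
      rw [ContinuousLinearMap.coe_coe, hQ0apply] at hx
      exact (Submodule.linearProjOfIsCompl_apply_eq_zero_iff hW.symm).mp
        (by exact_mod_cast (Submodule.coe_eq_zero).mp hx)
    · intro hx
      rw [ContinuousLinearMap.coe_coe, hQ0apply]
      exact_mod_cast congrArg Subtype.val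
        (Submodule.linearProjOfIsCompl_apply_right' hW.symm hx) -- may need fixing
  have hprojP : ∀ k : ℤ, (0:ℤ) ≤ k → ∀ x, P k (P k x) = P k x := fun k hk x =>
    cptw (hED.proj k hk) x
  have hP0fix : ∀ x, x ∈ R → P 0 x = x := by
    rintro x ⟨y, rfl⟩
    exact hprojP 0 le_rfl y
  set D : Euc n →L[ℝ] Euc n := Q0 - P 0 with hDdef
  have hDfix : ∀ x, P 0 (D x) = D x := fun x => by
    simp only [hDdef, ContinuousLinearMap.sub_apply, map_sub]
    rw [hP0fix _ (hQ0mem x), hprojP 0 le_rfl x]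
  have hDP : ∀ x, D (P 0 x) = 0 := fun x => by
    simp only [hDdef, ContinuousLinearMap.sub_apply]
    rw [hQ0fix (P 0 x) ⟨x, rfl⟩, hprojP 0 le_rfl x, sub_self]
  obtain ⟨Ψ, hΨ⟩ := hED.backward
  set E : ℤ → (Euc n →L[ℝ] Euc n) :=
    fun k => Phi A k 0 ∘L (D ∘L (Ψ 0 k ∘L (1 - P k))) with hEdef
  have hEapply : ∀ k x, E k x = Phi A k 0 (D (Ψ 0 k ((1 - P k) x))) := fun k x => rfl
  set Q : ℤ → (Euc n →L[ℝ] Euc n) := fun k => P k + E k with hQdef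
  have hQapply : ∀ k x, Q k x = P k x + E k x := fun k x => rfl
  have f1 : ∀ k : ℤ, (0:ℤ) ≤ k → ∀ x, (1 - P k) x ∈ LinearMap.ker (P k : Euc n →ₗ[ℝ] Euc n) := fun k hk x => by
    rw [LinearMap.mem_ker]
    simp only [ContinuousLinearMap.coe_coe, ContinuousLinearMap.sub_apply, ContinuousLinearMap.one_apply, map_sub,
      hprojP k hk x, sub_self]
  have f2 : ∀ k : ℤ, (0:ℤ) ≤ k → ∀ x, Ψ 0 k ((1 - P k) x) ∈ LinearMap.ker (P 0 : Euc n →ₗ[ℝ] Euc n) :=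
    fun k hk x => ((hΨ 0 h0J k hk hk).2.1 _ (f1 k hk x)).1
  have f3 : ∀ k : ℤ, (0:ℤ) ≤ k → ∀ x, Phi A k 0 (Ψ 0 k ((1 - P k) x)) = (1 - P k) x :=
    fun k hk x => ((hΨ 0 h0J k hk hk).2.1 _ (f1 k hk x)).2
  have hinvP : ∀ m : ℤ, (0:ℤ) ≤ m → ∀ k : ℤ, (0:ℤ) ≤ k → m ≤ k →
      ∀ x, Phi A k m (P m x) = P k (Phi A k m x) := by
    intro m hm k hk hmk x
    have := cptw (hED.invariance m hm k hk hmk) x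
    rwa [ContinuousLinearMap.comp_apply] at this
  have pe : ∀ k : ℤ, (0:ℤ) ≤ k → ∀ x, P k (E k x) = E k x := by
    intro k hk x
    have h1 := hinvP 0 le_rfl k hk hk (D (Ψ 0 k ((1 - P k) x)))
    rw [hEapply, ← h1, hDfix]
  have ep : ∀ k : ℤ, (0:ℤ) ≤ k → ∀ x, E k (P k x) = 0 := by
    intro k hk x
    have h0 : (1 - P k) (P k x) = 0 := by
      simp [ContinuousLinearMap.sub_apply, hprojP k hk x]
    rw [hEapply, h0, map_zero, map_zero, map_zero]
  have ee : ∀ k : ℤ, (0:ℤ) ≤ k → ∀ x, E k (E k x) = 0 := by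
    intro k hk x
    rw [← pe k hk x, ep k hk]
  have pq : ∀ k : ℤ, (0:ℤ) ≤ k → ∀ x, P k (Q k x) = Q k x := by
    intro k hk x
    rw [hQapply, map_add, hprojP k hk x, pe k hk x]
  have qp : ∀ k : ℤ, (0:ℤ) ≤ k → ∀ x, Q k (P k x) = P k x := by
    intro k hk x
    rw [hQapply, hprojP k hk x, ep k hk x, add_zero]
  have qq : ∀ k : ℤ, (0:ℤ) ≤ k → ∀ x, Q k (Q k x) = Q k x := by
    intro k hk x
    have h1 : E k (Q k x) = 0 := by
      rw [hQapply k x, map_add, ep k hk x, ee k hk x, add_zero]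
    calc Q k (Q k x) = P k (Q k x) + E k (Q k x) := hQapply _ _
      _ = Q k x + 0 := by rw [pq k hk x, h1]
      _ = Q k x := add_zero _
  have hcomm : ∀ m : ℤ, (0:ℤ) ≤ m → ∀ k : ℤ, (0:ℤ) ≤ k → m ≤ k → ∀ x,
      (1 - P k) (Phi A k m x) = Phi A k m ((1 - P m) x) := by
    intro m hm k hk hmk x
    simp only [ContinuousLinearMap.sub_apply, ContinuousLinearMap.one_apply, map_sub]
    rw [hinvP m hm k hk hmk x]
  have hEinv : ∀ m : ℤ, (0:ℤ) ≤ m → ∀ k : ℤ, (0:ℤ) ≤ k → m ≤ k → ∀ x,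
      Phi A k m (E m x) = E k (Phi A k m x) := by
    intro m hm k hk hmk x
    have hv : Ψ 0 k ((1 - P k) (Phi A k m x)) = Ψ 0 m ((1 - P m) x) := by
      set v := Ψ 0 m ((1 - P m) x) with hvdef
      have s2 : (1 - P m) x = Phi A m 0 v := (f3 m hm x).symm
      rw [hcomm m hm k hk hmk x, s2, cptw (Phi_comp A hm hmk) v]
      exact (hΨ 0 h0J k hk hk).1 v (f2 m hm x)
    rw [hEapply m x, hEapply k (Phi A k m x), hv, cptw (Phi_comp A hm hmk) _]
  have hinvQ : ∀ m : ℤ, (0:ℤ) ≤ m → ∀ k : ℤ, (0:ℤ) ≤ k → m ≤ k →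
      Phi A k m ∘L Q m = Q k ∘L Phi A k m := by
    intro m hm k hk hmk
    refine ContinuousLinearMap.ext fun x => ?_
    rw [ContinuousLinearMap.comp_apply, ContinuousLinearMap.comp_apply, hQapply m x,
      hQapply k (Phi A k m x), map_add, hinvP m hm k hk hmk x, hEinv m hm k hk hmk x]
  have q0 : Q 0 = Q0 := by
    refine ContinuousLinearMap.ext fun x => ?_
    have hpsi0 : Ψ 0 0 ((1 - P 0) x) = (1 - P 0) x := by
      have h := (hΨ 0 h0J 0 h0J le_rfl).1 _ (f1 0 le_rfl x)
      rwa [Phi_self, ContinuousLinearMap.one_apply] at h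
    have hE0 : E 0 x = D x := by
      rw [hEapply 0 x, hpsi0, Phi_self, ContinuousLinearMap.one_apply]
      simp only [ContinuousLinearMap.sub_apply, ContinuousLinearMap.one_apply, map_sub,
        hDP x, sub_zero]
    rw [hQapply 0 x, hE0, hDdef]
    simp only [ContinuousLinearMap.sub_apply]
    abel
  have hker0 : LinearMap.ker (Q 0 : Euc n →ₗ[ℝ] Euc n) = W := by rw [q0, hQ0ker]
  have hrange : ∀ k : ℤ, (0:ℤ) ≤ k → LinearMap.range (Q k : Euc n →ₗ[ℝ] Euc n) = LinearMap.range (P k : Euc n →ₗ[ℝ] Euc n) := by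
    intro k hk
    apply le_antisymm
    · rintro z ⟨y, rfl⟩
      exact ⟨Q k y, pq k hk y⟩
    · rintro z ⟨y, rfl⟩
      exact ⟨P k y, qp k hk y⟩
  -- norm bounds
  have hK1 := hED.one_le_K
  have hK0 : (0:ℝ) < K := lt_of_lt_of_le one_pos hK1
  have hDn : (0:ℝ) ≤ ‖D‖ := norm_nonneg D
  have hexp1 : ∀ k : ℤ, (0:ℤ) ≤ k → Real.exp (-α * ((k:ℝ) - ((0:ℤ):ℝ))) ≤ 1 := by
    intro k hk
    apply Real.exp_le_one_iff.mpr
    have : (0:ℝ) ≤ (k:ℝ) := by exact_mod_cast hk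
    push_cast
    nlinarith [hED.alpha_pos]
  have hPn : ∀ k : ℤ, (0:ℤ) ≤ k → ‖P k‖ ≤ K := by
    intro k hk
    have h := hED.forward k hk k hk le_rfl
    rw [Phi_self, ContinuousLinearMap.one_def, ContinuousLinearMap.id_comp] at h
    calc ‖P k‖ ≤ K * Real.exp (-α * ((k:ℝ) - (k:ℝ))) := h
      _ = K := by simp
  have hPhiD : ∀ k : ℤ, (0:ℤ) ≤ k → ‖Phi A k 0 ∘L D‖ ≤ K * ‖D‖ := by
    intro k hk
    have heq : Phi A k 0 ∘L D = (Phi A k 0 ∘L P 0) ∘L D := by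
      refine ContinuousLinearMap.ext fun x => ?_
      simp only [ContinuousLinearMap.comp_apply, hDfix x]
    rw [heq]
    calc ‖(Phi A k 0 ∘L P 0) ∘L D‖ ≤ ‖Phi A k 0 ∘L P 0‖ * ‖D‖ :=
          ContinuousLinearMap.opNorm_comp_le _ _
      _ ≤ (K * Real.exp (-α * ((k:ℝ) - ((0:ℤ):ℝ)))) * ‖D‖ :=
          mul_le_mul_of_nonneg_right (hED.forward 0 h0J k hk hk) hDn
      _ ≤ K * ‖D‖ := by
          nlinarith [hexp1 k hk, mul_nonneg hK0.le hDn,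
            (Real.exp_pos (-α * ((k:ℝ) - ((0:ℤ):ℝ)))).le]
  have hΨn : ∀ k : ℤ, (0:ℤ) ≤ k → ‖Ψ 0 k ∘L (1 - P k)‖ ≤ K := by
    intro k hk
    calc ‖Ψ 0 k ∘L (1 - P k)‖ ≤ K * Real.exp (-α * ((k:ℝ) - ((0:ℤ):ℝ))) :=
          (hΨ 0 h0J k hk hk).2.2
      _ ≤ K * 1 := by
          have := hexp1 k hk
          gcongr
      _ = K := mul_one K
  have hEn : ∀ k : ℤ, (0:ℤ) ≤ k → ‖E k‖ ≤ K * ‖D‖ * K := by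
    intro k hk
    have heq : E k = (Phi A k 0 ∘L D) ∘L (Ψ 0 k ∘L (1 - P k)) := by
      rw [hEdef]
      simp only [ContinuousLinearMap.comp_assoc]
    rw [heq]
    calc ‖(Phi A k 0 ∘L D) ∘L (Ψ 0 k ∘L (1 - P k))‖
        ≤ ‖Phi A k 0 ∘L D‖ * ‖Ψ 0 k ∘L (1 - P k)‖ := ContinuousLinearMap.opNorm_comp_le _ _
      _ ≤ (K * ‖D‖) * K :=
          mul_le_mul (hPhiD k hk) (hΨn k hk) (norm_nonneg _)
            (mul_nonneg hK0.le hDn)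
  have hQn : ∀ k : ℤ, (0:ℤ) ≤ k → ‖Q k‖ ≤ K + K * ‖D‖ * K := by
    intro k hk
    calc ‖Q k‖ = ‖P k + E k‖ := rfl
      _ ≤ ‖P k‖ + ‖E k‖ := norm_add_le _ _
      _ ≤ K + K * ‖D‖ * K := add_le_add (hPn k hk) (hEn k hk)
  set K' : ℝ := K * (1 + K + K * ‖D‖ * K) with hK'def
  -- the backward family for Q
  set Ψ' : ℤ → ℤ → (Euc n →L[ℝ] Euc n) := fun m k => (1 - E m) ∘L (Ψ m k ∘L (1 - P k))
    with hΨ'def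
  have hΨ'apply : ∀ m k z, Ψ' m k z = Ψ m k ((1 - P k) z) - E m (Ψ m k ((1 - P k) z)) :=
    fun m k z => by
      simp only [hΨ'def, ContinuousLinearMap.comp_apply, ContinuousLinearMap.sub_apply,
        ContinuousLinearMap.one_apply]
  have hb1 : ∀ m : ℤ, (0:ℤ) ≤ m → ∀ k : ℤ, (0:ℤ) ≤ k → m ≤ k →
      ∀ x ∈ LinearMap.ker (Q m : Euc n →ₗ[ℝ] Euc n), Ψ' m k (Phi A k m x) = x := by
    intro m hm k hk hmk x hx
    have hx' : P m x + E m x = 0 := by rw [← hQapply m x]; exact hx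
    rw [hΨ'apply, hcomm m hm k hk hmk x, (hΨ m hm k hk hmk).1 _ (f1 m hm x)]
    have hEu : E m ((1 - P m) x) = E m x := by
      simp only [ContinuousLinearMap.sub_apply, ContinuousLinearMap.one_apply, map_sub,
        ep m hm x, sub_zero]
    rw [hEu]
    simp only [ContinuousLinearMap.sub_apply, ContinuousLinearMap.one_apply]
    have : x - P m x - E m x = x - (P m x + E m x) := by abel
    rw [this, hx', sub_zero]
  have hb2 : ∀ m : ℤ, (0:ℤ) ≤ m → ∀ k : ℤ, (0:ℤ) ≤ k → m ≤ k →
      ∀ x ∈ LinearMap.ker (Q k : Euc n →ₗ[ℝ] Euc n),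
        Ψ' m k x ∈ LinearMap.ker (Q m : Euc n →ₗ[ℝ] Euc n) ∧ Phi A k m (Ψ' m k x) = x := by
    intro m hm k hk hmk x hx
    have hx' : P k x + E k x = 0 := by rw [← hQapply k x]; exact hx
    set u : Euc n := (1 - P k) x with hudef
    set y : Euc n := Ψ m k u with hydef
    obtain ⟨hy1, hy2⟩ := (hΨ m hm k hk hmk).2.1 u (f1 k hk x)
    have hym : P m y = 0 := hy1
    have hΨ'x : Ψ' m k x = y - E m y := hΨ'apply m k x
    constructor
    · rw [LinearMap.mem_ker]
      show Q m (y - E m y) = 0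
      rw [hQapply m (y - E m y), map_sub, map_sub, hym, pe m hm y, ee m hm y]
      abel
    · rw [hΨ'x, map_sub, hy2]
      have hEy : Phi A k m (E m y) = E k x := by
        have hy' : (1 - P m) y = y := by
          simp only [ContinuousLinearMap.sub_apply, ContinuousLinearMap.one_apply, hym,
            sub_zero]
        set v : Euc n := Ψ 0 m y with hvdef
        obtain ⟨hv1, hv2⟩ := (hΨ 0 h0J m hm hm).2.1 y hy1
        have hu2 : Phi A k 0 v = u := by
          have c1 : Phi A k m (Phi A m 0 v) = Phi A k 0 v := cptw (Phi_comp A hm hmk) v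
          rw [← c1, hvdef, hv2, hydef, hy2]
        have hvk : Ψ 0 k u = v := by
          rw [← hu2]
          exact (hΨ 0 h0J k hk hk).1 v hv1
        have c2 : Phi A k m (Phi A m 0 (D v)) = Phi A k 0 (D v) :=
          cptw (Phi_comp A hm hmk) (D v)
        rw [hEapply m y, hy', ← hvdef, c2, hEapply k x, ← hudef, hvk]
      rw [hEy, hudef]
      simp only [ContinuousLinearMap.sub_apply, ContinuousLinearMap.one_apply]
      have : x - P k x - E k x = x - (P k x + E k x) := by abel
      rw [this, hx', sub_zero]
  have hb3 : ∀ m : ℤ, (0:ℤ) ≤ m → ∀ k : ℤ, (0:ℤ) ≤ k → m ≤ k →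
      ‖Ψ' m k ∘L (1 - Q k)‖ ≤ K' * Real.exp (-α * ((k:ℝ) - (m:ℝ))) := by
    intro m hm k hk hmk
    have heq : Ψ' m k ∘L (1 - Q k) = (1 - E m) ∘L (Ψ m k ∘L (1 - P k)) := by
      refine ContinuousLinearMap.ext fun x => ?_
      have hPQ : (1 - P k) ((1 - Q k) x) = (1 - P k) x := by
        simp only [ContinuousLinearMap.sub_apply, ContinuousLinearMap.one_apply, map_sub,
          pq k hk x]
        abel
      simp only [hΨ'def, ContinuousLinearMap.comp_apply, hPQ]
    rw [heq]
    have h1E : ‖(1 : Euc n →L[ℝ] Euc n) - E m‖ ≤ 1 + K * ‖D‖ * K := by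
      calc ‖(1 : Euc n →L[ℝ] Euc n) - E m‖ ≤ ‖(1 : Euc n →L[ℝ] Euc n)‖ + ‖E m‖ :=
            norm_sub_le _ _
        _ ≤ 1 + K * ‖D‖ * K := by
            refine add_le_add ?_ (hEn m hm)
            rw [ContinuousLinearMap.one_def]
            exact ContinuousLinearMap.norm_id_le
    calc ‖(1 - E m) ∘L (Ψ m k ∘L (1 - P k))‖
        ≤ ‖(1 : Euc n →L[ℝ] Euc n) - E m‖ * ‖Ψ m k ∘L (1 - P k)‖ :=
          ContinuousLinearMap.opNorm_comp_le _ _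
      _ ≤ (1 + K * ‖D‖ * K) * (K * Real.exp (-α * ((k:ℝ) - (m:ℝ)))) := by
          exact mul_le_mul h1E (hΨ m hm k hk hmk).2.2 (norm_nonneg _)
            (by nlinarith [mul_nonneg (mul_nonneg hK0.le hDn) hK0.le])
      _ ≤ K' * Real.exp (-α * ((k:ℝ) - (m:ℝ))) := by
          rw [hK'def]
          nlinarith [mul_nonneg (mul_nonneg hK0.le hK0.le)
            (Real.exp_pos (-α * ((k:ℝ) - (m:ℝ)))).le]
  have hEDQ : ExpDichotomyOn A {k : ℤ | 0 ≤ k} Q K' α := by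
    constructor
    · rw [hK'def]
      nlinarith [hK1, hDn, sq_nonneg K,
        mul_nonneg hK0.le (mul_nonneg (mul_nonneg hK0.le hDn) hK0.le)]
    · exact hED.alpha_pos
    · intro k hk
      exact ContinuousLinearMap.ext fun x => by
        rw [ContinuousLinearMap.comp_apply]; exact qq k hk x
    · intro k hk m hm
      rw [hrange k hk, hrange m hm]
      exact hED.rank_const k hk m hm
    · exact fun m hm k hk hmk => hinvQ m hm k hk hmk
    · intro m hm k hk hmk
      have heq : Phi A k m ∘L Q m = (Phi A k m ∘L P m) ∘L Q m := by
        refine ContinuousLinearMap.ext fun x => ?_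
        simp only [ContinuousLinearMap.comp_apply, pq m hm x]
      rw [heq]
      calc ‖(Phi A k m ∘L P m) ∘L Q m‖ ≤ ‖Phi A k m ∘L P m‖ * ‖Q m‖ :=
            ContinuousLinearMap.opNorm_comp_le _ _
        _ ≤ (K * Real.exp (-α * ((k:ℝ) - (m:ℝ)))) * (K + K * ‖D‖ * K) := by
            exact mul_le_mul (hED.forward m hm k hk hmk) (hQn m hm) (norm_nonneg _)
              (mul_nonneg hK0.le (Real.exp_pos _).le)
        _ ≤ K' * Real.exp (-α * ((k:ℝ) - (m:ℝ))) := by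
            rw [hK'def]
            nlinarith [mul_nonneg hK0.le (Real.exp_pos (-α * ((k:ℝ) - (m:ℝ)))).le]
    · intro k hk hk1
      have hkk1 : k ≤ k + 1 := by omega
      refine ⟨?_, ?_, ?_⟩
      · intro x hx
        have h := cptw (hinvQ k hk (k+1) hk1 hkk1) x
        rw [ContinuousLinearMap.comp_apply] at h
        have hx0 : Q k x = 0 := hx
        rw [Phi_one] at h
        show A k x ∈ LinearMap.ker (Q (k+1) : Euc n →ₗ[ℝ] Euc n)
        rw [LinearMap.mem_ker, ContinuousLinearMap.coe_coe, ← h, hx0, map_zero]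
      · intro x hx y hy hxy
        have e1 := hb1 k hk (k+1) hk1 hkk1 x hx
        have e2 := hb1 k hk (k+1) hk1 hkk1 y hy
        rw [Phi_one] at e1 e2
        rw [← e1, ← e2, hxy]
      · intro y hy
        obtain ⟨hk1', hk2'⟩ := hb2 k hk (k+1) hk1 hkk1 y hy
        rw [Phi_one] at hk2'
        exact ⟨Ψ' k (k+1) y, hk1', hk2'⟩
    · exact ⟨Ψ', fun m hm k hk hmk =>
        ⟨hb1 m hm k hk hmk, hb2 m hm k hk hmk, hb3 m hm k hk hmk⟩⟩
  refine ⟨Q, ?_, hker0, ⟨K', α, hEDQ⟩, hrange⟩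
  intro k hk
  have h := hinvQ k hk (k+1) (by omega) (by omega)
  rw [Phi_one] at h
  exact h.symm

/-- for an exponential dichotomy on `ℤ₊` with projection `P`:
(a) the stable subspace `R(P(0))` is uniquely determined;
(b) for every complement `W` of `R(P(0))` there is a unique invariant projection family
`Q` with `N(Q(0)) = W` with respect to which the equation has an exponential dichotomy
on `ℤ₊`; moreover `R(Q(k)) = R(P(k))` for all `k ≥ 0`. -/
theorem statement4 {n : ℕ} (A P : ℤ → (Euc n →L[ℝ] Euc n)) (K α : ℝ)
    (hED : ExpDichotomyOn A {k : ℤ | 0 ≤ k} P K α) :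
    (∀ (Q : ℤ → (Euc n →L[ℝ] Euc n)) (K' α' : ℝ),
        ExpDichotomyOn A {k : ℤ | 0 ≤ k} Q K' α' →
        LinearMap.range (Q 0 : Euc n →ₗ[ℝ] Euc n) = LinearMap.range (P 0 : Euc n →ₗ[ℝ] Euc n)) ∧
    (∀ W : Submodule ℝ (Euc n), IsCompl W (LinearMap.range (P 0 : Euc n →ₗ[ℝ] Euc n)) →
      (∃ Q : ℤ → (Euc n →L[ℝ] Euc n),
        (∀ k : ℤ, 0 ≤ k → Q (k + 1) ∘L A k = A k ∘L Q k) ∧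
        LinearMap.ker (Q 0 : Euc n →ₗ[ℝ] Euc n) = W ∧
        (∃ K' α' : ℝ, ExpDichotomyOn A {k : ℤ | 0 ≤ k} Q K' α') ∧
        (∀ k : ℤ, 0 ≤ k → LinearMap.range (Q k : Euc n →ₗ[ℝ] Euc n) = LinearMap.range (P k : Euc n →ₗ[ℝ] Euc n))) ∧
      (∀ Q Q' : ℤ → (Euc n →L[ℝ] Euc n),
        ((∀ k : ℤ, 0 ≤ k → Q (k + 1) ∘L A k = A k ∘L Q k) ∧ LinearMap.ker (Q 0 : Euc n →ₗ[ℝ] Euc n) = W ∧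
          ∃ K' α' : ℝ, ExpDichotomyOn A {k : ℤ | 0 ≤ k} Q K' α') →
        ((∀ k : ℤ, 0 ≤ k → Q' (k + 1) ∘L A k = A k ∘L Q' k) ∧ LinearMap.ker (Q' 0 : Euc n →ₗ[ℝ] Euc n) = W ∧
          ∃ K' α' : ℝ, ExpDichotomyOn A {k : ℤ | 0 ≤ k} Q' K' α') →
        ∀ k : ℤ, 0 ≤ k → Q k = Q' k)) := by
  constructor
  · -- (a) uniqueness of the stable subspace
    intro Q K' α' hQ
    ext x
    rw [range_char A Q hQ le_rfl x, range_char A P hED le_rfl x]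
  · -- (b)
    intro W hW
    constructor
    · exact exists_Q A P K α hED W hW
    · rintro Q Q' ⟨hQinv, hQker, K1, α1, hQED⟩ ⟨hQ'inv, hQ'ker, K2, α2, hQ'ED⟩ k hk
      have hrange : ∀ j : ℤ, (0:ℤ) ≤ j →
          LinearMap.range (Q j : Euc n →ₗ[ℝ] Euc n) = LinearMap.range (Q' j : Euc n →ₗ[ℝ] Euc n) := by
        intro j hj
        ext x
        rw [range_char A Q hQED hj x, range_char A Q' hQ'ED hj x]
      have hker : ∀ j : ℤ, (0:ℤ) ≤ j →
          LinearMap.ker (Q j : Euc n →ₗ[ℝ] Euc n) = LinearMap.ker (Q' j : Euc n →ₗ[ℝ] Euc n) := by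
        intro j hj
        refine Int.le_induction
          (motive := fun j _ => LinearMap.ker (Q j : Euc n →ₗ[ℝ] Euc n) = LinearMap.ker (Q' j : Euc n →ₗ[ℝ] Euc n)) ?_ ?_ j hj
        · show LinearMap.ker (Q 0 : Euc n →ₗ[ℝ] Euc n) = LinearMap.ker (Q' 0 : Euc n →ₗ[ℝ] Euc n)
          rw [hQker, hQ'ker]
        · intro j hj ih
          have ih' : LinearMap.ker (Q j : Euc n →ₗ[ℝ] Euc n) = LinearMap.ker (Q' j : Euc n →ₗ[ℝ] Euc n) := ih
          show LinearMap.ker (Q (j+1) : Euc n →ₗ[ℝ] Euc n) = LinearMap.ker (Q' (j+1) : Euc n →ₗ[ℝ] Euc n)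
          have hj1 : (j + 1) ∈ {k : ℤ | 0 ≤ k} := by show (0:ℤ) ≤ j + 1; omega
          have h1 := hQED.bijOn j hj hj1
          have h2 := hQ'ED.bijOn j hj hj1
          apply SetLike.ext'
          calc (LinearMap.ker (Q (j+1) : Euc n →ₗ[ℝ] Euc n) : Set (Euc n))
              = A j '' (LinearMap.ker (Q j : Euc n →ₗ[ℝ] Euc n) : Set (Euc n)) := h1.image_eq.symm
            _ = A j '' (LinearMap.ker (Q' j : Euc n →ₗ[ℝ] Euc n) : Set (Euc n)) := by rw [ih']
            _ = (LinearMap.ker (Q' (j+1) : Euc n →ₗ[ℝ] Euc n) : Set (Euc n)) := h2.image_eq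
      exact proj_ext (hQED.proj k hk) (hQ'ED.proj k hk) (hrange k hk) (hker k hk)
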